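/- For every non-empty word w, one has des(w) = des(w \ sw(w)) + des(sw(w)), where sw(w) is the special wave of w and w \ sw(w) is the word obtained by removing sw(w) from w. -/

import Mathlib

namespace Paper

/-- number of descents of a word -/
def des : List ℕ → ℕ
  | a :: b :: t => (if b < a then 1 else 0) + des (b :: t)
  | _ => 0

/-- number of inversions of a word -/
def inv : List ℕ → ℕ
  | [] => 0
  | a :: t => (t.countP fun x => decide (x < a)) + inv t

/-- a word is (strictly) increasing -/
def Incr (w : List ℕ) : Prop := w.Chain' (· < ·)

/-- a word is a hook: `a₁ > a₂` and `a₂ < a₃ < ⋯ < a_s`, length ≥ 2 -/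
def IsHook : List ℕ → Prop
  | a :: b :: t => b < a ∧ (b :: t).Chain' (· < ·)
  | _ => False

/-- `(γ, hs)` is the hook factorization data of `w` -/
def IsHookFact (w γ : List ℕ) (hs : List (List ℕ)) : Prop :=
  Incr γ ∧ (∀ h ∈ hs, IsHook h) ∧ w = γ ++ hs.flatten

/-- the statistic `lec` computed from the hooks of a factorization -/
def lecVal (hs : List (List ℕ)) : ℕ := (hs.map inv).sum

/-- one-line word of `σ ∈ S_n`, with entries in `[1..n]` -/
def word {n : ℕ} (σ : Equiv.Perm (Fin n)) : List ℕ :=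
  List.ofFn fun i => (σ i : ℕ) + 1

/-- a word `w₁ ⋯ w_ℓ` with maximum in position `c` is a (nontrivial) reverse wave if
`c ≠ ℓ` and `w₁ < ⋯ < w_{c-1} < w_ℓ < w_{ℓ-1} < ⋯ < w_c`. -/
def IsRevWave (w : List ℕ) : Prop :=
  ∃ c, c + 1 < w.length ∧ (w.take c ++ (w.drop c).reverse).Chain' (· < ·)

/-- a word `w₁ ⋯ w_ℓ` with maximum in position `c` is a (nontrivial) wave if
`c ≠ ℓ` and `w_ℓ < w_{ℓ-1} < ⋯ < w_{c+1} < w₁ < ⋯ < w_c`. -/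
def IsWave (w : List ℕ) : Prop :=
  ∃ c, c + 1 < w.length ∧ ((w.drop (c + 1)).reverse ++ w.take (c + 1)).Chain' (· < ·)

/-- the maximal strictly decreasing run starting below `hi` and staying above `lo` -/
def decRun (hi lo : ℕ) : List ℕ → List ℕ
  | [] => []
  | b :: t => if b < hi ∧ lo < b then b :: decRun b lo t else []

def srwAux (lo : ℕ) : List ℕ → List ℕ
  | [] => []
  | [a] => [a]
  | a :: b :: t => if a < b then a :: srwAux a (b :: t) else a :: decRun a lo (b :: t)

/-- the special reverse wave of a word: the prefix `w₁ ⋯ w_s` where `t` is the position of the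
first descent (the whole word if none) and `s ≥ t` is maximal with
`w_t > w_{t+1} > ⋯ > w_s > w_{t-1}` (convention `w₀ = 0`). -/
def srw (w : List ℕ) : List ℕ := srwAux 0 w

/-- the number of special reverse descents: `des (srw w) + χ(w_s > w_{s+1})` -/
def srdes (w : List ℕ) : ℕ :=
  des (srw w) +
    match (srw w).getLast?, (w.drop (srw w).length).head? with
    | some x, some y => if y < x then 1 else 0
    | _, _ => 0

/-- the prefix `w₁ ⋯ w_t` of `w` ending at the position `t` of the first descent
(the whole word if there is no descent) -/
def incrPrefix : List ℕ → List ℕ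
  | [] => []
  | [a] => [a]
  | a :: b :: t => if a < b then a :: incrPrefix (b :: t) else [a]

/-- the special wave `w_r ⋯ w_t ⋯ w_s` of a word -/
def sw (w : List ℕ) : List ℕ :=
  let pre := incrPrefix w
  match w.drop pre.length with
  | [] => w
  | x :: rs =>
    let kept := pre.takeWhile fun u => decide (u < x)
    pre.drop kept.length ++ x :: decRun x (kept.getLastD 0) rs

/-- the word `w \ sw(w) = w₁ ⋯ w_{r-1} w_{s+1} ⋯ w_ℓ` obtained removing the special wave -/
def swCompl (w : List ℕ) : List ℕ :=
  let pre := incrPrefix w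
  match w.drop pre.length with
  | [] => []
  | x :: rs =>
    let kept := pre.takeWhile fun u => decide (u < x)
    kept ++ rs.drop (decRun x (kept.getLastD 0) rs).length

/-- insertion `ins(a,b) = a₁ ⋯ a_x b₁ ⋯ b_q a_{x+1} ⋯ a_p`, where `x` is maximal with
`a₁ < a₂ < ⋯ < a_x < b_q` -/
def ins (a b : List ℕ) : List ℕ :=
  let pfx := (incrPrefix a).takeWhile fun u => decide (u < b.getLastD 0)
  pfx ++ b ++ a.drop pfx.length

/-- the word `ρ = ρ₁ ⋯ ρ_m` (entries in `[1..n]`) associated to an injection `Fin m ↪ Fin n` -/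
def rho {n m : ℕ} (f : Fin m ↪ Fin n) : List ℕ :=
  List.ofFn fun j => (f j : ℕ) + 1

/-- descent number of the pair `(α₀, ρ)`: `des ρ + #{a ∈ α₀ : a > ρ₁}`,
where `α₀ = [n] \ {ρ₁, …, ρ_m}` -/
def desPair (n : ℕ) {m : ℕ} (f : Fin m ↪ Fin n) : ℕ :=
  des (rho f) + ((Finset.Icc 1 n).filter fun a => a ∉ rho f ∧ (rho f).headI < a).card

/-- descent number of the pair `(α₀, ρ)`, with `ρ` given as a list -/
def desPairL (n : ℕ) (ρ : List ℕ) : ℕ :=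
  des ρ + ((Finset.Icc 1 n).filter fun a => a ∉ ρ ∧ ρ.headI < a).card

/-- the map `μ`, sending `ρ` (with complementary set `α₀ = {α₁ < ⋯ < α_{n-k-1}}`) to
`α₁ ⋯ α_{n-k-m-1} α_{n-k-1} α_{n-k-2} ⋯ α_{n-k-m} ρ₁ ⋯ ρ_{k+1}`,
where `m = #{a ∈ α₀ : a > ρ₁}` -/
def mu (n : ℕ) (ρ : List ℕ) : List ℕ :=
  let A := ((Finset.Icc 1 n).filter fun a => a ∉ ρ).sort (· ≤ ·)
  let m := (A.filter fun a => decide (ρ.headI < a)).length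
  (A.take (A.length - m) ++ (A.drop (A.length - m)).reverse) ++ ρ

/-- boundary descent count between two lists -/
def bd (u v : List ℕ) : ℕ :=
  match u.getLast?, v.head? with
  | some a, some b => if b < a then 1 else 0
  | _, _ => 0

lemma bd_nil_right (u : List ℕ) : bd u [] = 0 := by
  unfold bd; cases u.getLast? <;> rfl

lemma bd_nil_left (v : List ℕ) : bd [] v = 0 := rfl

lemma bd_some {a b : ℕ} {u v : List ℕ} (hu : u.getLast? = some a) (hv : v.head? = some b) :
    bd u v = if b < a then 1 else 0 := by
  unfold bd; rw [hu, hv]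

lemma bd_cons (u : List ℕ) (a : ℕ) (v : List ℕ) : bd u (a :: v) = bd u [a] := rfl

lemma bd_append_right (u v z : List ℕ) (hv : v ≠ []) : bd u (v ++ z) = bd u v := by
  unfold bd
  rw [List.head?_append]
  cases v with
  | nil => exact absurd rfl hv
  | cons b t => rfl

lemma des_nil : des [] = 0 := rfl

lemma des_append : ∀ u v : List ℕ, des (u ++ v) = des u + bd u v + des v
  | [], v => by simp [des, bd]
  | [a], v => by
      cases v with
      | nil => simp [des, bd_nil_right]
      | cons b t => simp [des, bd]
  | a :: c :: u, v => by
      have ih := des_append (c :: u) v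
      simp only [List.cons_append, List.append_eq, des] at ih ⊢
      rw [ih]
      have hbd : bd (a :: c :: u) v = bd (c :: u) v := by
        unfold bd; rw [List.getLast?_cons_cons]
      rw [hbd]; omega

lemma des_of_chain' : ∀ {u : List ℕ}, u.Chain' (· < ·) → des u = 0
  | [], _ => rfl
  | [_], _ => rfl
  | a :: b :: t, h => by
      unfold List.Chain' at h; rw [List.isChain_cons_cons] at h
      simp [des, Nat.not_lt.2 (le_of_lt h.1), des_of_chain' h.2]

lemma bd_eq_zero_of_chain' {u v : List ℕ} (h : (u ++ v).Chain' (· < ·)) : bd u v = 0 := by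
  unfold List.Chain' at h; rw [List.isChain_append] at h
  unfold bd
  cases hu : u.getLast? with
  | none => rfl
  | some a =>
    cases hv : v.head? with
    | none => rfl
    | some b =>
      have := h.2.2 a hu b hv
      simp [Nat.not_lt.2 (le_of_lt this)]

/-- decRun is a prefix of the input -/
lemma decRun_prefix : ∀ (rs : List ℕ) (hi lo : ℕ), decRun hi lo rs <+: rs
  | [], _, _ => by simp [decRun]
  | b :: t, hi, lo => by
      unfold decRun
      split
      · exact List.cons_prefix_cons.2 ⟨rfl, decRun_prefix t b lo⟩
      · exact List.nil_prefix

lemma des_cons_decRun : ∀ (rs : List ℕ) (hi lo : ℕ),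
    des (hi :: decRun hi lo rs) = (decRun hi lo rs).length
  | [], _, _ => rfl
  | b :: t, hi, lo => by
      unfold decRun
      split
      · next h =>
        simp only [des, List.length_cons]
        rw [des_cons_decRun t b lo]
        simp [h.1]; omega
      · rfl

lemma getLastD_cons_eq (a : ℕ) (l : List ℕ) (c c' : ℕ) :
    (a :: l).getLastD c = (a :: l).getLastD c' := by
  rw [List.getLastD_eq_getLast?, List.getLastD_eq_getLast?, List.getLast?_cons]
  rfl

lemma decRun_getLastD_gt : ∀ (rs : List ℕ) (hi lo : ℕ), lo < hi →
    lo < (hi :: decRun hi lo rs).getLastD 0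
  | [], _, _, h => h
  | b :: t, hi, lo, h => by
      unfold decRun
      split
      · next hc =>
        rw [List.getLastD_cons, getLastD_cons_eq _ _ hi 0]
        exact decRun_getLastD_gt t b lo hc.2
      · exact h

lemma decRun_stop : ∀ (rs : List ℕ) (hi lo y : ℕ),
    (rs.drop (decRun hi lo rs).length).head? = some y →
    ¬(y < (hi :: decRun hi lo rs).getLastD 0 ∧ lo < y)
  | [], _, _, _, h => by simp at h
  | b :: t, hi, lo, y, h => by
      unfold decRun at h ⊢
      by_cases hc : b < hi ∧ lo < b
      · rw [if_pos hc] at h ⊢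
        simp only [List.length_cons, List.drop_succ_cons] at h
        have := decRun_stop t b lo y h
        rw [List.getLastD_cons, getLastD_cons_eq _ _ hi 0]
        exact this
      · rw [if_neg hc] at h ⊢
        simp only [List.length_nil, List.drop_zero, List.head?_cons, Option.some.injEq] at h
        subst h
        simpa using hc

lemma incrPrefix_chain' : ∀ w : List ℕ, (incrPrefix w).Chain' (· < ·)
  | [] => List.isChain_nil
  | [a] => List.isChain_singleton a
  | a :: b :: t => by
      unfold incrPrefix
      split
      · next h =>
        unfold List.Chain'; rw [List.isChain_cons]
        refine ⟨?_, incrPrefix_chain' (b :: t)⟩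
        intro y hy
        -- head? (incrPrefix (b :: t)) = some b
        have : (incrPrefix (b :: t)).head? = some b := by
          cases t with
          | nil => rfl
          | cons c t' => unfold incrPrefix; split <;> rfl
        rw [this] at hy
        cases hy; exact h
      · exact List.isChain_singleton a

lemma incrPrefix_prefix : ∀ w : List ℕ, incrPrefix w <+: w
  | [] => by simp [incrPrefix]
  | [a] => by simp [incrPrefix]
  | a :: b :: t => by
      unfold incrPrefix
      split
      · exact List.cons_prefix_cons.2 ⟨rfl, incrPrefix_prefix (b :: t)⟩
      · exact List.cons_prefix_cons.2 ⟨rfl, List.nil_prefix⟩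

lemma incrPrefix_ne_nil : ∀ w : List ℕ, w ≠ [] → incrPrefix w ≠ []
  | [a], _ => by simp [incrPrefix]
  | a :: b :: t, _ => by unfold incrPrefix; split <;> simp

lemma incrPrefix_stop : ∀ (w : List ℕ) (x : ℕ),
    (w.drop (incrPrefix w).length).head? = some x →
    ∃ g, (incrPrefix w).getLast? = some g ∧ ¬ g < x
  | [], x, h => by simp [incrPrefix] at h
  | [a], x, h => by simp [incrPrefix] at h
  | a :: b :: t, x, h => by
      unfold incrPrefix at h ⊢
      by_cases hab : a < b
      · rw [if_pos hab] at h ⊢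
        simp only [List.length_cons, List.drop_succ_cons] at h
        obtain ⟨g, hg, hgx⟩ := incrPrefix_stop (b :: t) x h
        refine ⟨g, ?_, hgx⟩
        rw [List.getLast?_cons, hg]
        rfl
      · rw [if_neg hab] at h ⊢
        simp only [List.length_cons, List.length_nil, List.drop_succ_cons,
          List.drop_zero, List.head?_cons, Option.some.injEq] at h
        subst h
        exact ⟨a, rfl, hab⟩


lemma getLast?_eq_getLastD : ∀ (l : List ℕ), l ≠ [] → l.getLast? = some (l.getLastD 0)
  | a :: t, _ => by rw [List.getLast?_cons, List.getLastD_cons, List.getLastD_eq_getLast?]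

lemma getLastD_mem : ∀ (l : List ℕ), l ≠ [] → ∀ c : ℕ, l.getLastD c ∈ l
  | [a], _, c => by simp
  | a :: b :: t, _, c => by
      rw [List.getLastD_cons]
      exact List.mem_cons_of_mem _ (getLastD_mem (b :: t) (by simp) a)


end Paper
/-- for every non-empty word `w`,
`des w = des (w \ sw w) + des (sw w)`. -/
theorem Paper.statement14 (w : List ℕ) (hw : w ≠ []) (hnd : w.Nodup)
    (hpos : ∀ x ∈ w, 0 < x) :
    des w = des (swCompl w) + des (sw w) := by
  have hwp : incrPrefix w ++ w.drop (incrPrefix w).length = w :=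
    List.prefix_iff_eq_append.1 (incrPrefix_prefix w)
  cases hdrop : w.drop (incrPrefix w).length with
  | nil =>
    have hsw : sw w = w := by simp only [sw, hdrop]
    have hsc : swCompl w = [] := by simp only [swCompl, hdrop]
    rw [hsw, hsc, des_nil]
    omega
  | cons x rs =>
    have hsw : sw w = (incrPrefix w).drop ((incrPrefix w).takeWhile fun u => decide (u < x)).length
        ++ x :: decRun x (((incrPrefix w).takeWhile fun u => decide (u < x)).getLastD 0) rs := by
      simp only [sw, hdrop]
    have hsc : swCompl w = ((incrPrefix w).takeWhile fun u => decide (u < x))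
        ++ rs.drop (decRun x (((incrPrefix w).takeWhile fun u => decide (u < x)).getLastD 0) rs).length := by
      simp only [swCompl, hdrop]
    set pre := incrPrefix w with hpre
    set kept := pre.takeWhile fun u => decide (u < x) with hkept
    set lo := kept.getLastD 0 with hlo
    set d := decRun x lo rs with hdd
    set dropped := pre.drop kept.length with hdropped
    set rs' := rs.drop d.length with hrs'
    -- decompositions
    have f1 : kept ++ dropped = pre :=
      List.prefix_iff_eq_append.1 (List.takeWhile_prefix _)
    have f2 : d ++ rs' = rs :=
      List.prefix_iff_eq_append.1 (decRun_prefix rs x lo)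
    have hw2 : pre ++ x :: rs = w := by rw [← hwp, hdrop]
    have hweq : w = kept ++ (dropped ++ ((x :: d) ++ rs')) := by
      rw [← hw2, ← f1, ← f2]; simp
    -- last of pre
    obtain ⟨g, hg, hgx⟩ := incrPrefix_stop w x (by rw [hdrop]; rfl)
    rw [← hpre] at hg
    have hpre_ne : pre ≠ [] := incrPrefix_ne_nil w hw
    have hchain : pre.Chain' (· < ·) := incrPrefix_chain' w
    -- nodup pieces
    have hnd2 : (pre ++ x :: rs).Nodup := by rw [hw2]; exact hnd
    have hdisj : pre.Disjoint (x :: rs) := fun a ha hb => (List.nodup_append.1 hnd2).2.2 a ha a hb rfl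
    have hgmem : g ∈ pre := by
      have : pre.getLastD 0 = g := by rw [List.getLastD_eq_getLast?, hg]; rfl
      rw [← this]; exact getLastD_mem pre hpre_ne 0
    have hxg : x < g := by
      rcases Nat.lt_trichotomy g x with h | h | h
      · exact absurd h hgx
      · exact absurd (h ▸ (List.mem_cons_self (a := x) (l := rs))) (hdisj hgmem)
      · exact h
    -- dropped is nonempty
    have hdropped_ne : dropped ≠ [] := by
      intro hcon
      rw [hcon, List.append_nil] at f1
      have hgk : g ∈ kept := by rw [f1]; exact hgmem
      rw [hkept] at hgk
      have h2 := List.mem_takeWhile_imp hgk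
      simp only [decide_eq_true_eq] at h2
      omega
    -- dropped.getLast? = some g
    have hdl : dropped.getLast? = some g := by
      rw [← hg, ← f1, List.getLast?_append]
      cases hdc : dropped.getLast? with
      | none => exact absurd (List.getLast?_eq_none_iff.1 hdc) hdropped_ne
      | some a => rfl
    -- lo < x
    have hlox : lo < x := by
      by_cases hkn : kept = []
      · rw [hlo, hkn]
        exact hpos x (by rw [hweq]; simp)
      · have hm : lo ∈ kept := hlo ▸ getLastD_mem kept hkn 0
        rw [hkept] at hm
        have h2 := List.mem_takeWhile_imp hm
        simpa only [decide_eq_true_eq] using h2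
    -- des computations
    have hdk : des kept = 0 :=
      des_of_chain' (List.isChain_append.1 (f1 ▸ hchain)).1
    have hdr : des dropped = 0 :=
      des_of_chain' (List.isChain_append.1 (f1 ▸ hchain)).2.1
    have hdxd : des (x :: d) = d.length := des_cons_decRun rs x lo
    -- boundary kept/dropped is 0
    have hb1 : bd kept (dropped ++ ((x :: d) ++ rs')) = 0 := by
      rw [bd_append_right _ _ _ hdropped_ne]
      exact bd_eq_zero_of_chain' (f1 ▸ hchain)
    -- boundary dropped/(x::d) is 1
    have hb2 : bd dropped ((x :: d) ++ rs') = 1 := by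
      rw [bd_append_right _ _ _ (by simp), bd_cons]
      unfold bd
      rw [hdl]
      simp [hxg]
    have hb2' : bd dropped (x :: d) = 1 := by
      rw [bd_cons]
      unfold bd
      rw [hdl]
      simp [hxg]
    -- the key boundary equality
    have hb3 : bd (x :: d) rs' = bd kept rs' := by
      cases hrc : rs' with
      | nil => rw [bd_nil_right, bd_nil_right]
      | cons y t' =>
        have hstop := decRun_stop rs x lo y (by rw [← hrs', hrc]; rfl)
        rw [← hdd] at hstop
        have hloB : lo < (x :: d).getLastD 0 := hdd ▸ decRun_getLastD_gt rs x lo hlox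
        have hBmem : (x :: d).getLastD 0 ∈ (x :: d) := getLastD_mem _ (by simp) 0
        have hymem : y ∈ rs' := by rw [hrc]; exact List.mem_cons_self
        have hyrs : y ∈ x :: rs := by
          refine List.mem_cons_of_mem _ ?_
          rw [← f2]; exact List.mem_append_right d hymem
        have hnd3 : ((x :: d) ++ rs').Nodup := by
          have := hnd2
          rw [← f2] at this
          simpa using (List.nodup_append.1 this).2.1
        have hyB : y ≠ (x :: d).getLastD 0 :=
          fun h => (List.nodup_append.1 hnd3).2.2 _ hBmem _ hymem h.symm
        have hL : bd (x :: d) (y :: t') = if y < (x :: d).getLastD 0 then 1 else 0 :=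
          bd_some (getLast?_eq_getLastD _ (by simp)) rfl
        by_cases hyb : y < (x :: d).getLastD 0
        · -- descent on the left; then y ≤ lo, kept nonempty, y < lo
          have hylo : ¬ lo < y := fun h => hstop ⟨hyb, h⟩
          have hkn : kept ≠ [] := by
            intro hcon
            have h0 : lo = 0 := by rw [hlo, hcon]; rfl
            have : 0 < y := hpos y (by rw [hweq, hrc]; simp)
            omega
          have hlomem : lo ∈ pre := by
            rw [← f1]
            exact List.mem_append_left _ (hlo ▸ getLastD_mem kept hkn 0)
          have hylo2 : y < lo := by
            rcases Nat.lt_trichotomy y lo with h | h | h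
            · exact h
            · exact absurd (h ▸ hyrs) (fun hc => hdisj hlomem hc)
            · omega
          have hkl : kept.getLast? = some lo := by
            rw [getLast?_eq_getLastD kept hkn, ← hlo]
          rw [hL, bd_some hkl (rfl : (y :: t').head? = some y), if_pos hyb, if_pos hylo2]
        · -- no descent on the left: B < y, and lo < B < y so none on the right
          have hBy : (x :: d).getLastD 0 < y := by omega
          rw [hL, if_neg hyb]
          by_cases hkn : kept = []
          · rw [hkn, bd_nil_left]
          · have hkl : kept.getLast? = some lo := by
              rw [getLast?_eq_getLastD kept hkn, ← hlo]
            rw [bd_some hkl (rfl : (y :: t').head? = some y), if_neg (by omega)]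
    -- assemble
    rw [hsw, hsc]
    nth_rewrite 1 [hweq]
    rw [des_append, des_append, des_append, des_append, des_append]
    rw [hdk, hdr, hdxd, hb1, hb2, hb2', hb3]
    omega
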